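/- Let n ≥ 2, 0 < a < b, α₁ > 0, α₂ > 0, and let f be continuous on Ā with f ≥ 0 on Ā. Suppose u is C² on Ā, satisfies −Δu(x) = f(x) for every x ∈ A, and satisfies the Robin boundary conditions with parameters α₁, α₂. Then u ≥ 0 on Ā. -/

import Mathlib

open MeasureTheory Metric Set Real
open scoped InnerProductSpace ENNReal Classical

noncomputable section

abbrev Euc (n : ℕ) := EuclideanSpace ℝ (Fin n)

/-- The Laplacian: sum of second partial derivatives. -/
def lap {n : ℕ} (u : Euc n → ℝ) (x : Euc n) : ℝ :=
  ∑ i : Fin n, fderiv ℝ (fun y => fderiv ℝ u y (EuclideanSpace.single i 1)) x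
    (EuclideanSpace.single i 1)

/-- Surface measure on the unit sphere: (n-1)-dimensional Hausdorff measure restricted
to the sphere. -/
def sphereMeasure (n : ℕ) : Measure (Euc n) :=
  (μH[(n : ℝ) - 1]).restrict (sphere (0 : Euc n) 1)

/-- First standard basis vector. -/
def e₁ (n : ℕ) : Euc n := if h : 0 < n then EuclideanSpace.single (⟨0, h⟩ : Fin n) 1 else 0

/-- Open polar cap of geodesic radius θ centered at e₁. -/
def polarCap (n : ℕ) (θ : ℝ) : Set (Euc n) :=
  {ξ | ξ ∈ sphere (0 : Euc n) 1 ∧ Real.cos θ < ⟪e₁ n, ξ⟫_ℝ}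

/-- Decreasing rearrangement of `g` with respect to the measure `μ`. -/
def decRearr {X : Type*} [MeasurableSpace X] (μ : Measure X) (g : X → ℝ) (t : ℝ) : ℝ :=
  sInf {s : ℝ | μ {x | s < g x} ≤ ENNReal.ofReal t}

/-- Spherical rearrangement of a function on the unit sphere. -/
def sphRearr (n : ℕ) (g : Euc n → ℝ) (ξ : Euc n) : ℝ :=
  decRearr (sphereMeasure n) g
    ((sphereMeasure n (polarCap n (Real.arccos ⟪e₁ n, ξ⟫_ℝ))).toReal)

/-- Cap symmetrization: spherical rearrangement sphere-by-sphere. -/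
def capSymm (n : ℕ) (f : Euc n → ℝ) (x : Euc n) : ℝ :=
  if x = 0 then f 0 else sphRearr n (fun ξ => f (‖x‖ • ξ)) (‖x‖⁻¹ • x)

/-- Open spherical shell. -/
def shell (n : ℕ) (a b : ℝ) : Set (Euc n) := {x | a < ‖x‖ ∧ ‖x‖ < b}

/-- `u` is C² on an open neighborhood of the closure of `A`. -/
def IsC2OnClosure {n : ℕ} (u : Euc n → ℝ) (A : Set (Euc n)) : Prop :=
  ∃ U, IsOpen U ∧ closure A ⊆ U ∧ ContDiffOn ℝ 2 u U

/-! ### Auxiliary lemmas -/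

lemma aux_closure_shell {n : ℕ} {a b : ℝ} (ha : 0 < a) (hab : a < b) :
    closure (shell n a b) = {x : Euc n | a ≤ ‖x‖ ∧ ‖x‖ ≤ b} := by
  apply subset_antisymm
  · refine closure_minimal (fun x hx => ⟨hx.1.le, hx.2.le⟩) ?_
    have : {x : Euc n | a ≤ ‖x‖ ∧ ‖x‖ ≤ b} = (fun x : Euc n => ‖x‖) ⁻¹' Icc a b := rfl
    rw [this]
    exact isClosed_Icc.preimage continuous_norm
  · rintro x ⟨hxa, hxb⟩
    have hx0 : x ≠ 0 := by
      intro h; rw [h, norm_zero] at hxa; linarith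
    have hnx : (0:ℝ) < ‖x‖ := lt_of_lt_of_le ha hxa
    set m : ℝ → Euc n := fun r => (r * ‖x‖⁻¹) • x with hm
    have hmc : Continuous m := by fun_prop
    have hsub : m '' (Ioo a b) ⊆ shell n a b := by
      rintro y ⟨r, hr, rfl⟩
      have hr0 : 0 < r := lt_trans ha hr.1
      have : ‖m r‖ = r := by
        rw [hm]; simp [norm_smul, abs_of_pos, hr0, hnx, abs_of_pos (mul_pos hr0 (inv_pos.2 hnx))]
        field_simp
      exact ⟨by rw [this]; exact hr.1, by rw [this]; exact hr.2⟩
    have hximg : x ∈ m '' (closure (Ioo a b)) := by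
      refine ⟨‖x‖, by rw [closure_Ioo hab.ne]; exact ⟨hxa, hxb⟩, ?_⟩
      rw [hm]; simp [mul_inv_cancel₀ (ne_of_gt hnx)]
    exact closure_mono hsub (image_closure_subset_closure_image hmc hximg)

lemma aux_deriv_nonneg_right {g : ℝ → ℝ} {g' δ : ℝ} (hg : HasDerivAt g g' 0) (hδ : 0 < δ)
    (hmin : ∀ t ∈ Icc (0:ℝ) δ, g 0 ≤ g t) : 0 ≤ g' := by
  have h := hasDerivAt_iff_tendsto_slope.1 hg
  have h2 : Filter.Tendsto (slope g 0) (nhdsWithin 0 (Ioi 0)) (nhds g') :=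
    h.mono_left (nhdsWithin_mono _ (fun t ht => ne_of_gt ht))
  refine ge_of_tendsto h2 ?_
  filter_upwards [Ioo_mem_nhdsGT_of_mem (Set.left_mem_Ico.2 hδ)] with t ht
  rw [slope_def_field]
  have h1 : g 0 ≤ g t := hmin t ⟨ht.1.le, ht.2.le⟩
  have : (0:ℝ) < t - 0 := by simpa using ht.1
  exact div_nonneg (by linarith) (by linarith)

lemma aux_second_deriv_nonneg {φ ψ : ℝ → ℝ} {L δ : ℝ} (hδ : 0 < δ)
    (hφ : ∀ t ∈ Ioo (-δ) δ, HasDerivAt φ (ψ t) t)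
    (hψ : HasDerivAt ψ L 0)
    (hmin : ∀ t ∈ Ioo (-δ) δ, φ 0 ≤ φ t) : 0 ≤ L := by
  by_contra hL
  push_neg at hL
  have h0mem : (0:ℝ) ∈ Ioo (-δ) δ := by constructor <;> simp [hδ]
  have hloc : IsLocalMin φ 0 := by
    have hU : Ioo (-δ) δ ∈ nhds (0:ℝ) := isOpen_Ioo.mem_nhds h0mem
    exact Filter.eventually_of_mem hU hmin
  have hψ0 : ψ 0 = 0 := hloc.hasDerivAt_eq_zero (hφ 0 h0mem)
  have hs := hasDerivAt_iff_tendsto_slope.1 hψ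
  have hs2 : Filter.Tendsto (slope ψ 0) (nhdsWithin 0 (Ioi 0)) (nhds L) :=
    hs.mono_left (nhdsWithin_mono _ (fun t ht => ne_of_gt ht))
  have hev : ∀ᶠ t in nhdsWithin 0 (Ioi 0), slope ψ 0 t < 0 := hs2.eventually_lt_const hL
  obtain ⟨ε, hε, hsub⟩ := mem_nhdsGT_iff_exists_Ioo_subset.1 hev
  have hε0 : (0:ℝ) < ε := by
    rcases (Set.mem_Ioi.1 hε) with h; exact h
  set t₀ : ℝ := min ε δ / 2 with ht₀
  have ht₀pos : 0 < t₀ := by positivity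
  have ht₀ε : t₀ < ε := by
    have : min ε δ ≤ ε := min_le_left _ _
    simp only [ht₀]; linarith
  have ht₀δ : t₀ < δ := by
    have : min ε δ ≤ δ := min_le_right _ _
    simp only [ht₀]; linarith
  have hIccsub : Icc (0:ℝ) t₀ ⊆ Ioo (-δ) δ := fun s hs =>
    ⟨by linarith [hs.1], by linarith [hs.2]⟩
  have hcont : ContinuousOn φ (Icc 0 t₀) := fun s hs =>
    ((hφ s (hIccsub hs)).continuousAt).continuousWithinAt
  have hderiv : ∀ s ∈ Ioo (0:ℝ) t₀, HasDerivAt φ (ψ s) s := fun s hs =>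
    hφ s (hIccsub ⟨hs.1.le, hs.2.le⟩)
  obtain ⟨c, hc, hceq⟩ := exists_hasDerivAt_eq_slope φ ψ ht₀pos hcont hderiv
  have hcε : slope ψ 0 c < 0 := hsub ⟨hc.1, lt_trans hc.2 ht₀ε⟩
  rw [slope_def_field, hψ0] at hcε
  have hψc : ψ c < 0 := by
    have hc0 : 0 < c := hc.1
    have := (div_neg_iff).1 (by simpa using hcε)
    rcases this with ⟨h1, h2⟩ | ⟨h1, h2⟩
    · linarith
    · linarith
  rw [hceq] at hψc
  have hφt : φ t₀ < φ 0 := by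
    have ht0 : (0:ℝ) < t₀ - 0 := by simpa using ht₀pos
    have := (div_neg_iff).1 hψc
    rcases this with ⟨h1, h2⟩ | ⟨h1, h2⟩
    · linarith
    · linarith
  have := hmin t₀ ⟨by linarith, ht₀δ⟩
  linarith

lemma aux_secondderiv_eq {n : ℕ} {v : Euc n → ℝ} {x₀ : Euc n}
    (hv : ContDiffAt ℝ 2 v x₀) (e : Euc n) :
    HasFDerivAt (fun y => fderiv ℝ v y e) ((ContinuousLinearMap.apply ℝ ℝ e).comp
      (fderiv ℝ (fderiv ℝ v) x₀)) x₀ := by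
  have hF : DifferentiableAt ℝ (fderiv ℝ v) x₀ :=
    (hv.fderiv_right (m := 1) (by norm_num)).differentiableAt one_ne_zero
  exact (ContinuousLinearMap.apply ℝ ℝ e).hasFDerivAt.comp x₀ hF.hasFDerivAt

lemma aux_lap_nonneg_at_min {n : ℕ} {v : Euc n → ℝ} {U : Set (Euc n)} (hU : IsOpen U)
    (hv : ContDiffOn ℝ 2 v U) {x₀ : Euc n} (hx₀ : x₀ ∈ U)
    (hmin : ∀ y ∈ U, v x₀ ≤ v y) : 0 ≤ lap v x₀ := by
  obtain ⟨δ, hδ, hball⟩ := Metric.isOpen_iff.1 hU x₀ hx₀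
  have hvd : DifferentiableOn ℝ v U := hv.differentiableOn (by norm_num)
  apply Finset.sum_nonneg
  intro i _
  set e : Euc n := EuclideanSpace.single i 1 with he
  have hne : ‖e‖ = 1 := by simp [he]
  set c : ℝ → Euc n := fun t => x₀ + t • e with hc
  have hcd : ∀ t : ℝ, HasDerivAt c e t := by
    intro t
    have : HasDerivAt (fun t : ℝ => t • e) ((1:ℝ) • e) t := (hasDerivAt_id t).smul_const e
    simpa [hc] using this.const_add x₀
  have hmem : ∀ t ∈ Ioo (-δ) δ, c t ∈ U := by
    intro t ht
    apply hball
    simp only [hc, mem_ball]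
    rw [dist_eq_norm]
    simp only [add_sub_cancel_left]
    rw [norm_smul, hne, mul_one]
    rw [Real.norm_eq_abs, abs_lt]; exact ⟨ht.1, ht.2⟩
  set ψ : ℝ → ℝ := fun t => fderiv ℝ v (c t) e with hψdef
  have hφ : ∀ t ∈ Ioo (-δ) δ, HasDerivAt (v ∘ c) (ψ t) t := by
    intro t ht
    have hdt : DifferentiableAt ℝ v (c t) :=
      (hvd (c t) (hmem t ht)).differentiableAt (hU.mem_nhds (hmem t ht))
    simpa using (hdt.hasFDerivAt.comp_hasDerivAt t (hcd t))
  have hc0 : c 0 = x₀ := by simp [hc]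
  have hvx : ContDiffAt ℝ 2 v x₀ := (hv x₀ hx₀).contDiffAt (hU.mem_nhds hx₀)
  have hsecond := aux_secondderiv_eq hvx e
  have hψderiv : HasDerivAt ψ (fderiv ℝ (fun y => fderiv ℝ v y e) x₀ e) 0 := by
    have hc0' : HasDerivAt c e 0 := hcd 0
    rw [← hc0] at hsecond
    have h1 := hsecond.comp_hasDerivAt 0 hc0'
    rw [hc0] at hsecond
    rw [hsecond.fderiv]
    rw [hc0] at h1
    exact h1
  have hL := aux_second_deriv_nonneg hδ hφ hψderiv ?_
  · exact hL
  · intro t ht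
    have := hmin (c t) (hmem t ht)
    simpa [hc0] using this

lemma aux_w_deriv {n : ℕ} (y : Euc n) :
    HasFDerivAt (fun x : Euc n => ⟪x, x⟫_ℝ) ((2:ℝ) • innerSL ℝ y) y := by
  have h := (hasFDerivAt_id y).inner ℝ (hasFDerivAt_id y)
  refine h.congr_fderiv ?_
  ext v
  simp only [ContinuousLinearMap.smul_apply, innerSL_apply_apply, ContinuousLinearMap.comp_apply,
    fderivInnerCLM_apply, ContinuousLinearMap.prod_apply, ContinuousLinearMap.coe_id', id_eq,
    smul_eq_mul]
  rw [real_inner_comm v y]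
  ring

lemma aux_lap_sub {n : ℕ} {u : Euc n → ℝ} {U : Set (Euc n)} (hU : IsOpen U)
    (hu : ContDiffOn ℝ 2 u U) (ε : ℝ) {z : Euc n} (hz : z ∈ U) :
    lap (fun y => u y - ε * ⟪y, y⟫_ℝ) z = lap u z - 2 * n * ε := by
  have huz : ContDiffAt ℝ 2 u z := (hu z hz).contDiffAt (hU.mem_nhds hz)
  have hud : DifferentiableOn ℝ u U := hu.differentiableOn (by norm_num)
  have key : ∀ i : Fin n,
      fderiv ℝ (fun y => fderiv ℝ (fun x => u x - ε * ⟪x, x⟫_ℝ) y (EuclideanSpace.single i 1)) z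
        (EuclideanSpace.single i 1)
      = fderiv ℝ (fun y => fderiv ℝ u y (EuclideanSpace.single i 1)) z
        (EuclideanSpace.single i 1) - 2 * ε := by
    intro i
    set e : Euc n := EuclideanSpace.single i 1 with he
    have hee : ⟪e, e⟫_ℝ = 1 := by simp [he]
    have hveq : ∀ y ∈ U, fderiv ℝ (fun x => u x - ε * ⟪x, x⟫_ℝ) y e
        = fderiv ℝ u y e - ε * (2 * ⟪e, y⟫_ℝ) := by
      intro y hy
      have hudy : DifferentiableAt ℝ u y := (hud y hy).differentiableAt (hU.mem_nhds hy)
      have hder : HasFDerivAt (fun x => u x - ε * ⟪x, x⟫_ℝ)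
          (fderiv ℝ u y - ε • ((2:ℝ) • innerSL ℝ y)) y :=
        hudy.hasFDerivAt.sub ((aux_w_deriv y).const_mul ε)
      rw [hder.fderiv]
      simp only [ContinuousLinearMap.sub_apply, ContinuousLinearMap.smul_apply, innerSL_apply_apply,
        smul_eq_mul]
      rw [real_inner_comm y e]
    have hUev : U ∈ nhds z := hU.mem_nhds hz
    have hcong : (fun y => fderiv ℝ (fun x => u x - ε * ⟪x, x⟫_ℝ) y e)
        =ᶠ[nhds z] (fun y => fderiv ℝ u y e - ε * (2 * ⟪e, y⟫_ℝ)) :=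
      Filter.eventually_of_mem hUev hveq
    have hdu : HasFDerivAt (fun y => fderiv ℝ u y e)
        ((ContinuousLinearMap.apply ℝ ℝ e).comp (fderiv ℝ (fderiv ℝ u) z)) z :=
      aux_secondderiv_eq huz e
    have hlin : HasFDerivAt (fun y : Euc n => ε * (2 * ⟪e, y⟫_ℝ))
        (((2*ε) : ℝ) • innerSL ℝ e) z := by
      have heq : (fun y : Euc n => ε * (2 * ⟪e, y⟫_ℝ)) = ⇑(((2*ε) : ℝ) • innerSL ℝ e) := by
        funext y
        simp only [ContinuousLinearMap.smul_apply, innerSL_apply_apply, smul_eq_mul]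
        ring
      have h2 := (((2*ε) : ℝ) • innerSL ℝ e).hasFDerivAt (x := z)
      rwa [← heq] at h2
    have hfull : HasFDerivAt (fun y => fderiv ℝ (fun x => u x - ε * ⟪x, x⟫_ℝ) y e)
        (((ContinuousLinearMap.apply ℝ ℝ e).comp (fderiv ℝ (fderiv ℝ u) z))
          - ((2*ε) : ℝ) • innerSL ℝ e) z :=
      (hdu.sub hlin).congr_of_eventuallyEq hcong
    rw [hfull.fderiv, hdu.fderiv]
    simp only [ContinuousLinearMap.sub_apply, ContinuousLinearMap.smul_apply, innerSL_apply_apply,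
      smul_eq_mul]
    rw [hee]
    ring
  unfold lap
  rw [Finset.sum_congr rfl (fun i _ => key i), Finset.sum_sub_distrib]
  simp only [Finset.sum_const, Finset.card_univ, Fintype.card_fin, nsmul_eq_mul]
  ring

/-- **Minimum principle for Robin problems on shells**: if `f ≥ 0` and the Robin parameters
are positive, the solution is nonnegative on the closed shell. -/
theorem robin_shell_nonneg {n : ℕ} (hn : 2 ≤ n) {a b : ℝ} (ha : 0 < a) (hab : a < b)
    {α₁ α₂ : ℝ} (hα₁ : 0 < α₁) (hα₂ : 0 < α₂) (f u : Euc n → ℝ)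
    (hf : ContinuousOn f (closure (shell n a b)))
    (hfpos : ∀ x ∈ closure (shell n a b), 0 ≤ f x)
    (hu : IsC2OnClosure u (shell n a b))
    (hupde : ∀ x ∈ shell n a b, -lap u x = f x)
    (huRa : ∀ x : Euc n, ‖x‖ = a → fderiv ℝ u x (-(a⁻¹ • x)) + α₁ * u x = 0)
    (huRb : ∀ x : Euc n, ‖x‖ = b → fderiv ℝ u x (b⁻¹ • x) + α₂ * u x = 0) :
    ∀ x ∈ closure (shell n a b), 0 ≤ u x := by
  obtain ⟨U, hUopen, hclU, huC2⟩ := hu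
  set K := closure (shell n a b) with hK
  have hKchar : K = {x : Euc n | a ≤ ‖x‖ ∧ ‖x‖ ≤ b} := aux_closure_shell ha hab
  have hshellK : shell n a b ⊆ K := subset_closure
  have hucont : ContinuousOn u K := huC2.continuousOn.mono hclU
  have hKcomp : IsCompact K := by
    refine Metric.isCompact_of_isClosed_isBounded isClosed_closure ?_
    rw [hKchar]
    refine (Metric.isBounded_closedBall (x := (0 : Euc n)) (r := b)).subset ?_
    intro x hx
    simpa [Metric.mem_closedBall, dist_zero_right] using hx.2
  have hshellOpen : IsOpen (shell n a b) := by
    have : shell n a b = (fun x : Euc n => ‖x‖) ⁻¹' Ioo a b := rfl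
    rw [this]; exact isOpen_Ioo.preimage continuous_norm
  set S : Set (Euc n) := {x : Euc n | ‖x‖ = a ∨ ‖x‖ = b} with hS
  have hSK : S ⊆ K := by
    rw [hKchar]
    rintro x (h | h) <;> constructor <;> rw [h] <;> linarith
  have hSclosed : IsClosed S := by
    have : S = (fun x : Euc n => ‖x‖) ⁻¹' {a, b} := by ext x; simp [hS]
    rw [this]
    exact ((Set.finite_singleton b).insert a).isClosed.preimage continuous_norm
  have hScomp : IsCompact S := hKcomp.of_isClosed_subset hSclosed hSK
  have hSne : S.Nonempty := by
    refine ⟨EuclideanSpace.single (⟨0, by omega⟩ : Fin n) a, Or.inl ?_⟩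
    simp [abs_of_pos ha]
  obtain ⟨q, hqS, hqmin⟩ := hScomp.exists_isMinOn hSne (hucont.mono hSK)
  have hn2 : (2:ℝ) ≤ (n:ℝ) := by exact_mod_cast hn
  -- Step A: q is a global minimum of u on K
  have hmain : ∀ x ∈ K, u q ≤ u x := by
    intro x hx
    by_contra hlt
    push_neg at hlt
    have hb0 : (0:ℝ) < b := lt_trans ha hab
    have hb2 : (0:ℝ) < b ^ 2 := by positivity
    set ε : ℝ := (u q - u x) / (2 * b ^ 2) with hε
    have hεpos : 0 < ε := by
      apply div_pos (by linarith) (by positivity)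
    set v : Euc n → ℝ := fun y => u y - ε * ⟪y, y⟫_ℝ with hv
    have hvcont : ContinuousOn v K :=
      hucont.sub ((continuous_const.mul (continuous_id.inner continuous_id)).continuousOn)
    have hKne : K.Nonempty := ⟨q, hSK hqS⟩
    obtain ⟨z, hzK, hzmin⟩ := hKcomp.exists_isMinOn hKne hvcont
    have hzU : z ∈ U := hclU hzK
    have hznot : z ∉ shell n a b := by
      intro hzsh
      set U' : Set (Euc n) := U ∩ shell n a b with hU'
      have hU'open : IsOpen U' := hUopen.inter hshellOpen
      have hzU' : z ∈ U' := ⟨hzU, hzsh⟩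
      have hwC : ContDiff ℝ 2 (fun y : Euc n => ε * ⟪y, y⟫_ℝ) :=
        contDiff_const.mul (contDiff_id.inner ℝ contDiff_id)
      have hvC2 : ContDiffOn ℝ 2 v U' :=
        (huC2.mono inter_subset_left).sub (hwC.contDiffOn)
      have h0 : 0 ≤ lap v z := by
        refine aux_lap_nonneg_at_min hU'open hvC2 hzU' ?_
        intro y hy
        exact isMinOn_iff.1 hzmin y (hshellK hy.2)
      have hls : lap v z = lap u z - 2 * n * ε := aux_lap_sub hUopen huC2 ε hzU
      have hpde := hupde z hzsh
      have hfz : 0 ≤ f z := hfpos z (hshellK hzsh)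
      have : lap u z = -f z := by linarith
      rw [hls, this] at h0
      nlinarith
    have hzS : z ∈ S := by
      have hzK' := hzK
      rw [hKchar] at hzK'
      rw [hS]
      rcases lt_or_eq_of_le hzK'.1 with h1 | h1
      · rcases lt_or_eq_of_le hzK'.2 with h2 | h2
        · exact absurd ⟨h1, h2⟩ hznot
        · exact Or.inr h2
      · exact Or.inl h1.symm
    -- the chain of inequalities
    have hxq : v z ≤ v x := isMinOn_iff.1 hzmin x hx
    have huzq : u q ≤ u z := isMinOn_iff.1 hqmin z hzS
    have hzz : ⟪z, z⟫_ℝ ≤ b ^ 2 := by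
      rw [real_inner_self_eq_norm_sq]
      have hzb : ‖z‖ ≤ b := by rw [hKchar] at hzK; exact hzK.2
      have := norm_nonneg z
      nlinarith
    have hxx : (0:ℝ) ≤ ⟪x, x⟫_ℝ := real_inner_self_nonneg
    have hεb : ε * b ^ 2 = (u q - u x) / 2 := by
      rw [hε]; field_simp
    have h1 : u x - ε * ⟪x, x⟫_ℝ ≥ u z - ε * ⟪z, z⟫_ℝ := hxq
    nlinarith [mul_nonneg hεpos.le hxx, mul_le_mul_of_nonneg_left hzz hεpos.le]
  -- Step B: u q ≥ 0
  have hq0 : 0 ≤ u q := by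
    by_contra hq
    push_neg at hq
    have hqU : q ∈ U := hclU (hSK hqS)
    have hqdiff : DifferentiableAt ℝ u q :=
      ((huC2.differentiableOn (by norm_num)) q hqU).differentiableAt (hUopen.mem_nhds hqU)
    have hba : (0:ℝ) < b - a := by linarith
    rcases hqS with hna | hnb
    · -- inner boundary
      have hR := huRa q hna
      set w : Euc n := a⁻¹ • q with hw
      have hcw : HasDerivAt (fun t : ℝ => q + t • w) w 0 := by
        have : HasDerivAt (fun t : ℝ => t • w) ((1:ℝ) • w) 0 := (hasDerivAt_id 0).smul_const w
        simpa using this.const_add q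
      have hg : HasDerivAt (fun t : ℝ => u (q + t • w)) (fderiv ℝ u q w) 0 := by
        have hF := hqdiff.hasFDerivAt
        rw [show q = ((fun t : ℝ => q + t • w) 0) from by simp] at hF
        have h2 := hF.comp_hasDerivAt 0 hcw
        simp only [zero_smul, add_zero] at h2
        exact h2
      have hmin' : ∀ t ∈ Icc (0:ℝ) (b - a), u (q + (0:ℝ) • w) ≤ u (q + t • w) := by
        intro t ht
        have hmem : q + t • w ∈ K := by
          rw [hKchar]
          have heq : q + t • w = (1 + t * a⁻¹) • q := by
            rw [hw, add_smul, one_smul, smul_smul]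
          have hpos : (0:ℝ) < 1 + t * a⁻¹ := by
            have : 0 ≤ t * a⁻¹ := mul_nonneg ht.1 (inv_nonneg.2 ha.le)
            linarith
          have hnorm : ‖q + t • w‖ = a + t := by
            rw [heq, norm_smul, hna, Real.norm_eq_abs, abs_of_pos hpos]
            field_simp
          constructor
          · rw [hnorm]; linarith [ht.1]
          · rw [hnorm]; linarith [ht.2]
        have := hmain _ hmem
        simpa using this
      have hd1 : 0 ≤ fderiv ℝ u q w := by
        refine aux_deriv_nonneg_right hg hba ?_
        intro t ht
        exact hmin' t ht
      have hneg : fderiv ℝ u q (-(a⁻¹ • q)) = -(fderiv ℝ u q w) := by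
        rw [hw, map_neg]
      have : α₁ * u q < 0 := mul_neg_of_pos_of_neg hα₁ hq
      rw [hneg] at hR
      linarith
    · -- outer boundary
      have hR := huRb q hnb
      set w : Euc n := -(b⁻¹ • q) with hw
      have hcw : HasDerivAt (fun t : ℝ => q + t • w) w 0 := by
        have : HasDerivAt (fun t : ℝ => t • w) ((1:ℝ) • w) 0 := (hasDerivAt_id 0).smul_const w
        simpa using this.const_add q
      have hg : HasDerivAt (fun t : ℝ => u (q + t • w)) (fderiv ℝ u q w) 0 := by
        have hF := hqdiff.hasFDerivAt
        rw [show q = ((fun t : ℝ => q + t • w) 0) from by simp] at hF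
        have h2 := hF.comp_hasDerivAt 0 hcw
        simp only [zero_smul, add_zero] at h2
        exact h2
      have hb0 : (0:ℝ) < b := lt_trans ha hab
      have hmin' : ∀ t ∈ Icc (0:ℝ) (b - a), u (q + (0:ℝ) • w) ≤ u (q + t • w) := by
        intro t ht
        have hmem : q + t • w ∈ K := by
          rw [hKchar]
          have heq : q + t • w = (1 - t * b⁻¹) • q := by
            rw [hw, sub_smul, one_smul, smul_neg, smul_smul]
            abel
          have hpos : (0:ℝ) < 1 - t * b⁻¹ := by
            have h1 : t * b⁻¹ ≤ (b - a) * b⁻¹ :=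
              mul_le_mul_of_nonneg_right ht.2 (inv_nonneg.2 hb0.le)
            have h2 : (b - a) * b⁻¹ < 1 := by
              rw [sub_mul, mul_inv_cancel₀ (ne_of_gt hb0)]
              have : 0 < a * b⁻¹ := mul_pos ha (inv_pos.2 hb0)
              linarith
            linarith
          have hnorm : ‖q + t • w‖ = b - t := by
            rw [heq, norm_smul, hnb, Real.norm_eq_abs, abs_of_pos hpos]
            field_simp
          constructor
          · rw [hnorm]; linarith [ht.2]
          · rw [hnorm]; linarith [ht.1]
        have := hmain _ hmem
        simpa using this
      have hd1 : 0 ≤ fderiv ℝ u q w := by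
        refine aux_deriv_nonneg_right hg hba ?_
        intro t ht
        exact hmin' t ht
      have hneg : fderiv ℝ u q w = -(fderiv ℝ u q (b⁻¹ • q)) := by
        rw [hw, map_neg]
      have : α₂ * u q < 0 := mul_neg_of_pos_of_neg hα₂ hq
      rw [hneg] at hd1
      linarith
  intro x hx
  linarith [hmain x hx]
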